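/- Let σ > 1, z₀ > 1 and 1 − z₀ ≤ w₀ < 0, and let z be a solution of the damped oscillator ODE with data (z₀, w₀). Then z(t) = z₀ + w₀(1 − e^{−t}) for all t ≥ 0; in particular z(t) ≥ 1 for all t ≥ 0, |z(t) − (z₀ + w₀)| = |w₀| e^{−t}, and z(t) converges exponentially as t → +∞ to the limit z₀ + w₀ ≥ 1. -/

import Mathlib

/-- The force `Φ_σ'` (derivative of the normalized adhesion potential with `u_* = 1`). -/
noncomputable def PhiD (σ u : ℝ) : ℝ :=
  if |u| ≤ 1 - 1/σ then 2*u
  else if 1 - 1/σ ≤ u ∧ u ≤ 1 then 2*(σ - 1)*(1 - u)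
  else if -1 ≤ u ∧ u ≤ -1 + 1/σ then -(2*(σ - 1)*(1 + u))
  else 0

lemma phiD_of_one_le (σ u : ℝ) (hσ : 1 < σ) (hu : 1 ≤ u) : PhiD σ u = 0 := by
  have hσ0 : (0:ℝ) < σ := by linarith
  have h1 : 0 < 1/σ := by positivity
  have h2 : 1/σ < 1 := by rw [div_lt_one hσ0]; exact hσ
  unfold PhiD
  split_ifs with ha hb hc
  · exfalso; have := le_abs_self u; linarith
  · have : u = 1 := le_antisymm hb.2 hu
    rw [this]; ring
  · exfalso; have := hc.2; linarith
  · rfl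

lemma aux_linear (z z' z'' : ℝ → ℝ)
    (hz : ∀ t ≥ (0:ℝ), HasDerivAt z (z' t) t)
    (hz' : ∀ t ≥ (0:ℝ), HasDerivAt z' (z'' t) t)
    (T : ℝ) (hforce : ∀ s, 0 < s → s ≤ T → z'' s + z' s = 0) :
    ∀ t, 0 ≤ t → t ≤ T → z t = z 0 + z' 0 * (1 - Real.exp (-t)) := by
  have hA : ∀ t, 0 ≤ t → t ≤ T → z' t = z' 0 * Real.exp (-t) := by
    intro t ht0 htT
    rcases eq_or_lt_of_le ht0 with h | h
    · rw [← h]; simp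
    · set g : ℝ → ℝ := fun u => Real.exp u * z' u with hg
      have hgs : ∀ s, 0 < s → s ≤ t → g t = g s := by
        intro s hs0 hst
        have hcont : ContinuousOn g (Set.Icc s t) := fun x hx =>
          ((Real.continuous_exp.continuousAt).mul
            (hz' x (le_trans hs0.le hx.1)).continuousAt).continuousWithinAt
        have hderiv : ∀ x ∈ Set.Ico s t, HasDerivWithinAt g 0 (Set.Ici x) x := by
          intro x hx
          have hx0 : 0 < x := lt_of_lt_of_le hs0 hx.1
          have hd : HasDerivAt g (Real.exp x * z' x + Real.exp x * z'' x) x :=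
            (Real.hasDerivAt_exp x).mul (hz' x hx0.le)
          have hzero : Real.exp x * z' x + Real.exp x * z'' x = 0 := by
            have hfx := hforce x hx0 (hx.2.le.trans htT)
            linear_combination Real.exp x * hfx
          exact (hzero ▸ hd).hasDerivWithinAt
        exact constant_of_has_deriv_right_zero hcont hderiv t (Set.right_mem_Icc.mpr hst)
      have hc0 : ContinuousAt g 0 :=
        (Real.continuous_exp.continuousAt).mul (hz' 0 le_rfl).continuousAt
      have h1 : Filter.Tendsto g (nhdsWithin 0 (Set.Ioi 0)) (nhds (g 0)) :=
        hc0.continuousWithinAt.tendsto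
      have h2 : ∀ᶠ s in nhdsWithin (0:ℝ) (Set.Ioi 0), g s = g t := by
        filter_upwards [Ioo_mem_nhdsGT_of_mem (Set.left_mem_Ico.mpr h)] with s hs
        exact (hgs s hs.1 hs.2.le).symm
      have h3 : Filter.Tendsto g (nhdsWithin 0 (Set.Ioi 0)) (nhds (g t)) :=
        Filter.Tendsto.congr' (h2.mono fun s hs => hs.symm) tendsto_const_nhds
      have h4 : g 0 = g t := tendsto_nhds_unique h1 h3
      have h5 : Real.exp t * z' t = z' 0 := by
        have : g 0 = Real.exp 0 * z' 0 := rfl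
        rw [this, Real.exp_zero, one_mul] at h4
        exact h4.symm
      have hexp : Real.exp t ≠ 0 := (Real.exp_pos t).ne'
      rw [Real.exp_neg]
      field_simp
      linarith [h5]
  intro t ht0 htT
  set h : ℝ → ℝ := fun u => z u - (z 0 + z' 0 * (1 - Real.exp (-u))) with hh
  have hcont : ContinuousOn h (Set.Icc 0 t) := by
    intro x hx
    have c1 : ContinuousAt z x := (hz x hx.1).continuousAt
    have c2 : Continuous (fun u : ℝ => z 0 + z' 0 * (1 - Real.exp (-u))) := by
      continuity
    exact (c1.sub c2.continuousAt).continuousWithinAt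
  have hderiv : ∀ x ∈ Set.Ico 0 t, HasDerivWithinAt h 0 (Set.Ici x) x := by
    intro x hx
    have e1 : HasDerivAt (fun u : ℝ => Real.exp (-u)) (Real.exp (-x) * (-1)) x :=
      HasDerivAt.exp (hasDerivAt_neg x)
    have e2 : HasDerivAt (fun u : ℝ => z 0 + z' 0 * (1 - Real.exp (-u)))
        (z' 0 * Real.exp (-x)) x := by
      have := ((e1.const_sub 1).const_mul (z' 0)).const_add (z 0)
      exact this.congr_deriv (by ring)
    have e3 : HasDerivAt h (z' x - z' 0 * Real.exp (-x)) x := (hz x hx.1).sub e2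
    have e4 : z' x - z' 0 * Real.exp (-x) = 0 := by
      rw [hA x hx.1 (hx.2.le.trans htT)]; ring
    exact (e4 ▸ e3).hasDerivWithinAt
  have := constant_of_has_deriv_right_zero hcont hderiv t (Set.right_mem_Icc.mpr ht0)
  have hh0 : h 0 = 0 := by simp [hh]
  rw [hh0] at this
  have : z t - (z 0 + z' 0 * (1 - Real.exp (-t))) = 0 := this
  linarith

theorem case_III (σ z₀ w₀ : ℝ) (hσ : 1 < σ) (hz₀ : 1 < z₀)
    (hw₀l : 1 - z₀ ≤ w₀) (hw₀ : w₀ < 0)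
    (z z' z'' : ℝ → ℝ)
    (hz : ∀ t ≥ (0:ℝ), HasDerivAt z (z' t) t)
    (hz' : ∀ t ≥ (0:ℝ), HasDerivAt z' (z'' t) t)
    (hode : ∀ t > (0:ℝ), z'' t + z' t + PhiD σ (z t) = 0)
    (h0 : z 0 = z₀) (h0' : z' 0 = w₀) :
    (∀ t ≥ (0:ℝ), z t = z₀ + w₀ * (1 - Real.exp (-t)) ∧ 1 ≤ z t ∧
      |z t - (z₀ + w₀)| = |w₀| * Real.exp (-t)) ∧ 1 ≤ z₀ + w₀ := by
  have hsum : 1 ≤ z₀ + w₀ := by linarith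
  have hygt : ∀ t : ℝ, 1 < z₀ + w₀ * (1 - Real.exp (-t)) := by
    intro t
    nlinarith [Real.exp_pos (-t)]
  have key : ∀ t, 0 ≤ t → z t = z₀ + w₀ * (1 - Real.exp (-t)) := by
    have hge : ∀ t, 0 ≤ t → 1 ≤ z t := by
      by_contra hcon
      push_neg at hcon
      obtain ⟨t₀, ht₀, hlt⟩ := hcon
      set B := {t : ℝ | 0 ≤ t ∧ z t < 1} with hB
      have hBne : B.Nonempty := ⟨t₀, ht₀, hlt⟩
      have hBbdd : BddBelow B := ⟨0, fun b hb => hb.1⟩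
      set t₁ := sInf B with ht₁
      have ht₁0 : 0 ≤ t₁ := le_csInf hBne fun b hb => hb.1
      have hlow : ∀ s, 0 ≤ s → s < t₁ → 1 ≤ z s := by
        intro s hs0 hst
        by_contra hc
        push_neg at hc
        exact absurd (csInf_le hBbdd ⟨hs0, hc⟩) (not_le.mpr hst)
      have hcontz : ∀ s, (0:ℝ) ≤ s → ContinuousAt z s := fun s hs => (hz s hs).continuousAt
      have hcl : t₁ ∈ closure B := csInf_mem_closure hBne hBbdd
      haveI hneB : (nhdsWithin t₁ B).NeBot := mem_closure_iff_nhdsWithin_neBot.mp hcl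
      have hle1 : z t₁ ≤ 1 := by
        have htd : Filter.Tendsto z (nhdsWithin t₁ B) (nhds (z t₁)) :=
          (hcontz t₁ ht₁0).continuousWithinAt
        refine le_of_tendsto htd ?_
        filter_upwards [self_mem_nhdsWithin] with s hs
        exact hs.2.le
      have hge1 : 1 ≤ z t₁ := by
        by_contra hc
        push_neg at hc
        have ht₁pos : 0 < t₁ := by
          rcases eq_or_lt_of_le ht₁0 with hE | hE
          · exfalso; rw [← hE, h0] at hc; linarith
          · exact hE
        obtain ⟨ε, hε, hball⟩ := Metric.mem_nhds_iff.mp ((hcontz t₁ ht₁0) (Iio_mem_nhds hc))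
        set s := max (t₁/2) (t₁ - ε/2) with hs
        have hs_lt : s < t₁ := max_lt (by linarith) (by linarith)
        have hs0 : 0 ≤ s := le_trans (by linarith) (le_max_left _ _)
        have hmem : s ∈ Metric.ball t₁ ε := by
          rw [Metric.mem_ball, Real.dist_eq, abs_of_neg (by linarith : s - t₁ < 0)]
          have : t₁ - ε/2 ≤ s := le_max_right _ _
          linarith
        have hzs : z s < 1 := hball hmem
        exact absurd (csInf_le hBbdd ⟨hs0, hzs⟩) (not_le.mpr hs_lt)
      have hforce : ∀ s, 0 < s → s ≤ t₁ → z'' s + z' s = 0 := by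
        intro s hs0 hst
        have h1 : 1 ≤ z s := by
          rcases eq_or_lt_of_le hst with hE | hE
          · rw [hE]; exact hge1
          · exact hlow s hs0.le hE
        have := hode s hs0
        rw [phiD_of_one_le σ _ hσ h1] at this
        linarith
      have hfin := aux_linear z z' z'' hz hz' t₁ hforce t₁ ht₁0 le_rfl
      rw [h0, h0'] at hfin
      rw [hfin] at hle1
      exact absurd hle1 (not_le.mpr (hygt t₁))
    intro t ht
    have hforce : ∀ s, 0 < s → s ≤ t → z'' s + z' s = 0 := by
      intro s hs0 hst
      have := hode s hs0
      rw [phiD_of_one_le σ _ hσ (hge s hs0.le)] at this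
      linarith
    have hfin := aux_linear z z' z'' hz hz' t hforce t ht le_rfl
    rw [h0, h0'] at hfin
    exact hfin
  constructor
  · intro t ht
    refine ⟨key t ht, ?_, ?_⟩
    · rw [key t ht]; exact (hygt t).le
    · rw [key t ht]
      have : z₀ + w₀ * (1 - Real.exp (-t)) - (z₀ + w₀) = -w₀ * Real.exp (-t) := by ring
      rw [this, abs_mul, abs_neg, abs_of_pos (Real.exp_pos _)]
  · exact hsum
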